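/- Let m, n ≥ 1 be integers and let G_{m,n} = Gp⟨x, y | x^m y^n x^m y^{-n} = 1⟩ be the corresponding presented group. Let K_{m,n} be the subgroup of G_{m,n} generated by y^{2n} together with the elements y^i x y^{-i} for 0 ≤ i ≤ 2n−1. Then the assignment β ↦ y^{2n} and α_i ↦ y^i x y^{-i} (0 ≤ i ≤ 2n−1) induces a group isomorphism from the presented group Gp⟨β, α_0, …, α_{2n−1} | α_i^m α_{i+n}^m = 1 and α_i^m β = β α_i^m for 0 ≤ i ≤ n−1⟩ onto K_{m,n}. -/

import Mathlib

/-- The single relator `x^m y^n x^m y^{-n}` of the group `G_{m,n}`, where `x` is the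
generator `0` and `y` is the generator `1`. -/
def gmnRels (m n : ℕ) : Set (FreeGroup (Fin 2)) :=
  {(FreeGroup.of 0) ^ m * (FreeGroup.of 1) ^ n * (FreeGroup.of 0) ^ m *
    ((FreeGroup.of 1) ^ n)⁻¹}

/-- The one-relator group `G_{m,n} = Gp⟨x, y | x^m y^n x^m y^{-n} = 1⟩`. -/
abbrev Gmn (m n : ℕ) := PresentedGroup (gmnRels m n)

/-- The generator `x` of `G_{m,n}`. -/
def Gmn.x (m n : ℕ) : Gmn m n := PresentedGroup.of 0

/-- The generator `y` of `G_{m,n}`. -/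
def Gmn.y (m n : ℕ) : Gmn m n := PresentedGroup.of 1

/-- Relators of the presentation
`Gp⟨β, α_0, …, α_{2n−1} | α_i^m α_{i+n}^m = 1, α_i^m β = β α_i^m (0 ≤ i ≤ n−1)⟩`,
with `none` playing the role of `β` and `some i` the role of `α_i`. -/
def kRels (m n : ℕ) : Set (FreeGroup (Option (Fin (2 * n)))) :=
  {r | ∃ i : Fin n,
    r = (FreeGroup.of (some ⟨i.val, by have := i.isLt; omega⟩)) ^ m *
        (FreeGroup.of (some ⟨i.val + n, by have := i.isLt; omega⟩)) ^ m ∨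
    r = (FreeGroup.of (some ⟨i.val, by have := i.isLt; omega⟩)) ^ m * FreeGroup.of none *
        (FreeGroup.of none * (FreeGroup.of (some ⟨i.val, by have := i.isLt; omega⟩)) ^ m)⁻¹}

namespace KmnAux

lemma mk_of {α : Type*} (rels : Set (FreeGroup α)) (x : α) :
    PresentedGroup.mk rels (FreeGroup.of x) = PresentedGroup.of x := rfl

lemma mk_rel_one {α : Type*} (rels : Set (FreeGroup α)) {r : FreeGroup α} (hr : r ∈ rels) :
    PresentedGroup.mk rels r = 1 := by
  apply (QuotientGroup.eq_one_iff _).2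
  exact Subgroup.subset_normalClosure hr

section G
variable (m n : ℕ)

local notation "X" => Gmn.x m n
local notation "Y" => Gmn.y m n

lemma grel1 : X ^ m * Y ^ n * X ^ m * (Y ^ n)⁻¹ = 1 := by
  have h := mk_rel_one (gmnRels m n) (Set.mem_singleton _)
  simpa only [map_mul, map_pow, map_inv, mk_of, Gmn.x, Gmn.y] using h

lemma grel2 : Y ^ n * X ^ m = (X ^ m)⁻¹ * Y ^ n := by
  have h : X ^ m * Y ^ n * X ^ m = Y ^ n := mul_inv_eq_one.mp (grel1 m n)
  calc Y ^ n * X ^ m = (X ^ m)⁻¹ * (X ^ m * Y ^ n * X ^ m) := by group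
    _ = (X ^ m)⁻¹ * Y ^ n := by rw [h]

lemma grel4 : X ^ m * Y ^ n = Y ^ n * (X ^ m)⁻¹ := by
  have h : X ^ m * Y ^ n * X ^ m = Y ^ n := mul_inv_eq_one.mp (grel1 m n)
  calc X ^ m * Y ^ n = (X ^ m * Y ^ n * X ^ m) * (X ^ m)⁻¹ := by group
    _ = Y ^ n * (X ^ m)⁻¹ := by rw [h]

lemma grel3 : Y ^ (2 * n) * X ^ m = X ^ m * Y ^ (2 * n) := by
  have h2 := grel2 m n
  have h4 := grel4 m n
  calc Y ^ (2 * n) * X ^ m = Y ^ n * (Y ^ n * X ^ m) := by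
        rw [two_mul, pow_add, mul_assoc]
    _ = Y ^ n * ((X ^ m)⁻¹ * Y ^ n) := by rw [h2]
    _ = (Y ^ n * (X ^ m)⁻¹) * Y ^ n := by rw [mul_assoc]
    _ = (X ^ m * Y ^ n) * Y ^ n := by rw [h4]
    _ = X ^ m * Y ^ (2 * n) := by rw [two_mul, pow_add]; group

/-- the target values of the generators -/
def fK : Option (Fin (2 * n)) → Gmn m n
  | none => Y ^ (2 * n)
  | some i => Y ^ (i : ℕ) * X * (Y ^ (i : ℕ))⁻¹

lemma fK_rels : ∀ r ∈ kRels m n, FreeGroup.lift (fK m n) r = 1 := by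
  rintro r ⟨i, h | h⟩ <;> subst h <;>
    simp only [map_mul, map_pow, map_inv, FreeGroup.lift_apply_of, fK, conj_pow]
  · calc Y ^ i.val * X ^ m * (Y ^ i.val)⁻¹ *
          (Y ^ (i.val + n) * X ^ m * (Y ^ (i.val + n))⁻¹)
        = Y ^ i.val * (X ^ m * Y ^ n * X ^ m * (Y ^ n)⁻¹) * (Y ^ i.val)⁻¹ := by
          rw [pow_add]; group
      _ = 1 := by rw [grel1]; group
  · rw [mul_inv_eq_one]
    calc Y ^ i.val * X ^ m * (Y ^ i.val)⁻¹ * Y ^ (2 * n)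
        = Y ^ i.val * (X ^ m * Y ^ (2 * n)) * (Y ^ i.val)⁻¹ := by group
      _ = Y ^ i.val * (Y ^ (2 * n) * X ^ m) * (Y ^ i.val)⁻¹ := by rw [grel3]
      _ = Y ^ (2 * n) * (Y ^ i.val * X ^ m * (Y ^ i.val)⁻¹) := by group

/-- the homomorphism `φ` -/
def phi : PresentedGroup (kRels m n) →* Gmn m n := PresentedGroup.toGroup (fK_rels m n)

lemma phi_none : phi m n (PresentedGroup.of none) = Y ^ (2 * n) :=
  PresentedGroup.toGroup.of _

lemma phi_some (i : Fin (2 * n)) :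
    phi m n (PresentedGroup.of (some i)) = Y ^ (i : ℕ) * X * (Y ^ (i : ℕ))⁻¹ :=
  PresentedGroup.toGroup.of _

end G

section K
variable (m n : ℕ)

abbrev Kt := PresentedGroup (kRels m n)

abbrev bb : Kt m n := PresentedGroup.of none

abbrev aa (i : Fin (2 * n)) : Kt m n := PresentedGroup.of (some i)

lemma conj_pow' {G : Type*} [Group G] {a b : G} {k : ℕ} :
    (a⁻¹ * b * a) ^ k = a⁻¹ * b ^ k * a := by
  simpa using conj_pow (i := k) (a := a⁻¹) (b := b)

lemma aa_congr {a b : ℕ} (ha : a < 2 * n) (hb : b < 2 * n) (h : a = b) :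
    aa m n ⟨a, ha⟩ = aa m n ⟨b, hb⟩ := by subst h; rfl

lemma conj_eq_self_of_comm {G : Type*} [Group G] {a b : G} (h : a * b = b * a) :
    b * a * b⁻¹ = a := by
  rw [← h]; group

lemma conj_eq_self_of_comm' {G : Type*} [Group G] {a b : G} (h : a * b = b * a) :
    b⁻¹ * a * b = a := by
  rw [mul_assoc, h]; group

lemma mul_one_swap {G : Type*} [Group G] {a b : G} (h : a * b = 1) : b * a = 1 := by
  rw [eq_inv_of_mul_eq_one_left h, mul_inv_cancel]

lemma krel1 (i : ℕ) (hi : i < n) (h1 : i < 2 * n) (h2 : i + n < 2 * n) :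
    aa m n ⟨i, h1⟩ ^ m * aa m n ⟨i + n, h2⟩ ^ m = 1 := by
  have h := mk_rel_one (kRels m n) (show _ ∈ kRels m n from ⟨⟨i, hi⟩, Or.inl rfl⟩)
  simp only [map_mul, map_pow, mk_of] at h
  exact h

lemma krel2 (i : ℕ) (hi : i < n) (h1 : i < 2 * n) :
    Commute (aa m n ⟨i, h1⟩ ^ m) (bb m n) := by
  have h := mk_rel_one (kRels m n) (show _ ∈ kRels m n from ⟨⟨i, hi⟩, Or.inr rfl⟩)
  simp only [map_mul, map_pow, map_inv, mk_of] at h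
  exact mul_inv_eq_one.mp h

lemma comm_bb (j : Fin (2 * n)) : Commute (aa m n j ^ m) (bb m n) := by
  rcases lt_or_ge j.val n with h | h
  · exact krel2 m n j.val h j.isLt
  · have hi : j.val - n < n := by have := j.isLt; omega
    have h1 : j.val - n < 2 * n := by omega
    have h2 : j.val - n + n < 2 * n := by have := j.isLt; omega
    have k1 := krel1 m n (j.val - n) hi h1 h2
    have hj : (⟨j.val - n + n, h2⟩ : Fin (2 * n)) = j :=
      Fin.ext (show j.val - n + n = j.val by omega)
    rw [hj] at k1
    have e : aa m n j ^ m = (aa m n ⟨j.val - n, h1⟩ ^ m)⁻¹ :=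
      eq_inv_of_mul_eq_one_right k1
    rw [e]
    exact (krel2 m n (j.val - n) hi h1).inv_left

variable (hn : 1 ≤ n)

/-- generator images of the shift automorphism -/
def sf : Option (Fin (2 * n)) → Kt m n
  | none => bb m n
  | some i =>
      if h : i.val + 1 < 2 * n then aa m n ⟨i.val + 1, h⟩
      else bb m n * aa m n ⟨0, by omega⟩ * (bb m n)⁻¹

/-- generator images of the inverse shift -/
def sf' : Option (Fin (2 * n)) → Kt m n
  | none => bb m n
  | some i =>
      if h : 0 < i.val then aa m n ⟨i.val - 1, by have := i.isLt; omega⟩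
      else (bb m n)⁻¹ * aa m n ⟨2 * n - 1, by omega⟩ * bb m n

set_option maxHeartbeats 1000000 in
lemma sf_rels : ∀ r ∈ kRels m n, FreeGroup.lift (sf m n hn) r = 1 := by
  rintro r ⟨i, h | h⟩ <;> subst h <;>
    simp only [map_mul, map_pow, map_inv, FreeGroup.lift_apply_of, sf]
  · have d1 : i.val + 1 < 2 * n := by have := i.isLt; omega
    rw [dif_pos d1]
    by_cases hc : i.val + n + 1 < 2 * n
    · rw [dif_pos hc]
      have h3 := krel1 m n (i.val + 1) (by have := i.isLt; omega) d1 (by omega)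
      rwa [show (⟨i.val + 1 + n, by omega⟩ : Fin (2 * n)) = ⟨i.val + n + 1, hc⟩ from
        Fin.ext (show i.val + 1 + n = i.val + n + 1 by omega)] at h3
    · rw [dif_neg hc]
      have k0 := krel1 m n 0 (by omega) (by omega) (by omega)
      have e0 : (⟨0 + n, by omega⟩ : Fin (2 * n)) = ⟨i.val + 1, d1⟩ :=
        Fin.ext (show 0 + n = i.val + 1 by have := i.isLt; omega)
      rw [e0] at k0
      have key : (bb m n * aa m n ⟨0, by omega⟩ * (bb m n)⁻¹) ^ m =
          aa m n ⟨0, by omega⟩ ^ m := by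
        rw [conj_pow]
        exact conj_eq_self_of_comm (comm_bb m n ⟨0, by omega⟩).eq
      rw [key]
      exact mul_one_swap k0
  · have d1 : i.val + 1 < 2 * n := by have := i.isLt; omega
    rw [dif_pos d1, mul_inv_eq_one]
    exact (comm_bb m n ⟨i.val + 1, d1⟩).eq

set_option maxHeartbeats 1000000 in
lemma sf'_rels : ∀ r ∈ kRels m n, FreeGroup.lift (sf' m n hn) r = 1 := by
  rintro r ⟨i, h | h⟩ <;> subst h <;>
    simp only [map_mul, map_pow, map_inv, FreeGroup.lift_apply_of, sf']
  · have d2 : 0 < (i.val + n) := by omega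
    rw [dif_pos (show 0 < ((⟨i.val + n, by have := i.isLt; omega⟩ : Fin (2 * n))).val from d2)]
    by_cases hc : 0 < i.val
    · rw [dif_pos hc]
      have h3 := krel1 m n (i.val - 1) (by have := i.isLt; omega)
        (by have := i.isLt; omega) (by have := i.isLt; omega)
      rwa [show (⟨i.val - 1 + n, by have := i.isLt; omega⟩ : Fin (2 * n)) =
        ⟨i.val + n - 1, by have := i.isLt; omega⟩ from
        Fin.ext (show i.val - 1 + n = i.val + n - 1 by omega)] at h3
    · rw [dif_neg hc]
      have key : ((bb m n)⁻¹ * aa m n ⟨2 * n - 1, by omega⟩ * bb m n) ^ m =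
          aa m n ⟨2 * n - 1, by omega⟩ ^ m := by
        rw [conj_pow']
        exact conj_eq_self_of_comm' (comm_bb m n ⟨2 * n - 1, by omega⟩).eq
      rw [key]
      have k1 := krel1 m n (n - 1) (by omega) (by omega) (by omega)
      have e1 : (⟨n - 1 + n, by omega⟩ : Fin (2 * n)) = ⟨2 * n - 1, by omega⟩ :=
        Fin.ext (show n - 1 + n = 2 * n - 1 by omega)
      have e2 : (⟨n - 1, by omega⟩ : Fin (2 * n)) =
          ⟨i.val + n - 1, by have := i.isLt; omega⟩ :=
        Fin.ext (show n - 1 = i.val + n - 1 by omega)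
      rw [e1, e2] at k1
      exact mul_one_swap k1
  · by_cases hc : 0 < i.val
    · rw [dif_pos hc, mul_inv_eq_one]
      exact (comm_bb m n ⟨i.val - 1, by have := i.isLt; omega⟩).eq
    · rw [dif_neg hc, mul_inv_eq_one]
      have key : ((bb m n)⁻¹ * aa m n ⟨2 * n - 1, by omega⟩ * bb m n) ^ m =
          aa m n ⟨2 * n - 1, by omega⟩ ^ m := by
        rw [conj_pow']
        exact conj_eq_self_of_comm' (comm_bb m n ⟨2 * n - 1, by omega⟩).eq
      rw [key]
      exact (comm_bb m n ⟨2 * n - 1, by omega⟩).eq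

/-- the shift endomorphism -/
def sigma : Kt m n →* Kt m n := PresentedGroup.toGroup (sf_rels m n hn)

/-- the inverse shift endomorphism -/
def sigma' : Kt m n →* Kt m n := PresentedGroup.toGroup (sf'_rels m n hn)

lemma sigma_of (o : Option (Fin (2 * n))) : sigma m n hn (PresentedGroup.of o) = sf m n hn o :=
  PresentedGroup.toGroup.of _

lemma sigma'_of (o : Option (Fin (2 * n))) : sigma' m n hn (PresentedGroup.of o) = sf' m n hn o :=
  PresentedGroup.toGroup.of _

lemma sigma'_comp_sigma : (sigma' m n hn).comp (sigma m n hn) = MonoidHom.id _ := by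
  apply PresentedGroup.ext
  intro o
  simp only [MonoidHom.comp_apply, MonoidHom.id_apply, sigma_of]
  cases o with
  | none =>
    rw [show sf m n hn none = bb m n from rfl, sigma'_of]
    rfl
  | some j =>
    by_cases h : j.val + 1 < 2 * n
    · rw [show sf m n hn (some j) = aa m n ⟨j.val + 1, h⟩ by rw [sf, dif_pos h],
        sigma'_of, sf', dif_pos (show 0 < j.val + 1 by omega)]
      show aa m n ⟨j.val + 1 - 1, by omega⟩ = aa m n ⟨j.val, j.isLt⟩
      exact aa_congr m n _ _ (by omega)
    · rw [show sf m n hn (some j) =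
          bb m n * aa m n ⟨0, by omega⟩ * (bb m n)⁻¹ by rw [sf, dif_neg h]]
      simp only [map_mul, map_inv, sigma'_of]
      rw [show sf' m n hn none = bb m n from rfl,
        show sf' m n hn (some ⟨0, by omega⟩) =
          (bb m n)⁻¹ * aa m n ⟨2 * n - 1, by omega⟩ * bb m n by
            rw [sf', dif_neg (show ¬0 < (0 : ℕ) by omega)]]
      have : (⟨2 * n - 1, by omega⟩ : Fin (2 * n)) = j :=
        Fin.ext (show 2 * n - 1 = j.val by have := j.isLt; omega)
      rw [this]; group

lemma sigma_comp_sigma' : (sigma m n hn).comp (sigma' m n hn) = MonoidHom.id _ := by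
  apply PresentedGroup.ext
  intro o
  simp only [MonoidHom.comp_apply, MonoidHom.id_apply, sigma'_of]
  cases o with
  | none =>
    rw [show sf' m n hn none = bb m n from rfl, sigma_of]
    rfl
  | some j =>
    by_cases h : 0 < j.val
    · rw [show sf' m n hn (some j) = aa m n ⟨j.val - 1, by have := j.isLt; omega⟩ by
        rw [sf', dif_pos h], sigma_of, sf, dif_pos (show j.val - 1 + 1 < 2 * n by
          have := j.isLt; omega)]
      show aa m n ⟨j.val - 1 + 1, by have := j.isLt; omega⟩ = aa m n ⟨j.val, j.isLt⟩
      exact aa_congr m n _ _ (by omega)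
    · rw [show sf' m n hn (some j) =
          (bb m n)⁻¹ * aa m n ⟨2 * n - 1, by omega⟩ * bb m n by rw [sf', dif_neg h]]
      simp only [map_mul, map_inv, sigma_of]
      rw [show sf m n hn none = bb m n from rfl,
        show sf m n hn (some ⟨2 * n - 1, by omega⟩) =
          bb m n * aa m n ⟨0, by omega⟩ * (bb m n)⁻¹ by
            rw [sf, dif_neg (show ¬(2 * n - 1 + 1 < 2 * n) by omega)]]
      have : (⟨0, by omega⟩ : Fin (2 * n)) = j := Fin.ext (show 0 = j.val by omega)
      rw [this]; group

/-- the shift automorphism -/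
def sigmaE : Kt m n ≃* Kt m n :=
  MonoidHom.toMulEquiv (sigma m n hn) (sigma' m n hn)
    (sigma'_comp_sigma m n hn) (sigma_comp_sigma' m n hn)

lemma sigmaE_apply (g : Kt m n) : sigmaE m n hn g = sigma m n hn g := rfl

end K

lemma two_n_ne (n : ℕ) (hn : 1 ≤ n) : (2 * n : ℤ) ≠ 0 := by omega

section Act
variable (m n : ℕ) (hn : 1 ≤ n)

lemma sigmaE_pow_aa (k : ℕ) : ∀ (j : Fin (2 * n)) (h : j.val + k < 2 * n),
    ((sigmaE m n hn) ^ k) (aa m n j) = aa m n ⟨j.val + k, h⟩ := by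
  induction k with
  | zero =>
    intro j h
    rw [pow_zero]
    show aa m n ⟨j.val, j.isLt⟩ = aa m n ⟨j.val + 0, h⟩
    exact aa_congr m n _ _ (by omega)
  | succ k ih =>
    intro j h
    have h1 : j.val + 1 < 2 * n := by omega
    rw [pow_succ, MulAut.mul_apply, sigmaE_apply, sigma_of, sf, dif_pos h1,
      ih ⟨j.val + 1, h1⟩ (show j.val + 1 + k < 2 * n by omega)]
    exact aa_congr m n _ _ (show j.val + 1 + k = j.val + (k + 1) by omega)

lemma sigmaE_pow_bb (k : ℕ) : ((sigmaE m n hn) ^ k) (bb m n) = bb m n := by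
  induction k with
  | zero => rw [pow_zero]; rfl
  | succ k ih =>
    rw [pow_succ, MulAut.mul_apply, sigmaE_apply, sigma_of]
    rw [show sf m n hn none = bb m n from rfl, ih]

lemma sigmaE_conj_eq : (sigmaE m n hn) ^ (2 * n) = MulAut.conj (bb m n) := by
  apply MulEquiv.toMonoidHom_injective
  apply PresentedGroup.ext
  intro o
  cases o with
  | none =>
    show ((sigmaE m n hn) ^ (2 * n)) (bb m n) = MulAut.conj (bb m n) (bb m n)
    rw [sigmaE_pow_bb, MulAut.conj_apply]
    group
  | some j =>
    show ((sigmaE m n hn) ^ (2 * n)) (aa m n j) = MulAut.conj (bb m n) (aa m n j)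
    have hsplit : 2 * n = j.val + (1 + (2 * n - 1 - j.val)) := by have := j.isLt; omega
    have hpow : (sigmaE m n hn) ^ (2 * n) =
        (sigmaE m n hn) ^ (j.val + (1 + (2 * n - 1 - j.val))) :=
      congrArg (fun t => (sigmaE m n hn) ^ t) hsplit
    rw [MulAut.conj_apply, hpow, pow_add, pow_add, MulAut.mul_apply, MulAut.mul_apply,
      pow_one]
    have e1 : ((sigmaE m n hn) ^ (2 * n - 1 - j.val)) (aa m n j) =
        aa m n ⟨2 * n - 1, by omega⟩ := by
      rw [sigmaE_pow_aa m n hn (2 * n - 1 - j.val) j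
        (show j.val + (2 * n - 1 - j.val) < 2 * n by have := j.isLt; omega)]
      exact aa_congr m n _ _ (show j.val + (2 * n - 1 - j.val) = 2 * n - 1 by
        have := j.isLt; omega)
    rw [e1, sigmaE_apply, sigma_of, sf, dif_neg (show ¬(2 * n - 1 + 1 < 2 * n) by omega)]
    rw [map_mul, map_mul, map_inv, sigmaE_pow_bb,
      sigmaE_pow_aa m n hn j.val ⟨0, by omega⟩
        (show 0 + j.val < 2 * n by have := j.isLt; omega)]
    congr 2
    show aa m n ⟨0 + j.val, _⟩ = aa m n ⟨j.val, j.isLt⟩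
    exact aa_congr m n _ _ (by omega)

/-- the action of `ℤ` on the presented kernel group -/
def act : Multiplicative ℤ →* MulAut (Kt m n) :=
  zpowersHom (MulAut (Kt m n)) (sigmaE m n hn)

/-- the big semidirect product -/
abbrev Gh := SemidirectProduct (Kt m n) (Multiplicative ℤ) (act m n hn)

lemma act_apply (g : Multiplicative ℤ) :
    act m n hn g = (sigmaE m n hn) ^ (Multiplicative.toAdd g) := rfl

lemma act_ofAdd_one : act m n hn (Multiplicative.ofAdd 1) = sigmaE m n hn := by
  rw [act_apply]
  simp

/-- generator images for the map from `G_{m,n}` to the semidirect product -/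
def gf : Fin 2 → Gh m n hn :=
  ![SemidirectProduct.inl (aa m n ⟨0, by omega⟩),
    SemidirectProduct.inr (Multiplicative.ofAdd 1)]

lemma gf_rels : ∀ r ∈ gmnRels m n, FreeGroup.lift (gf m n hn) r = 1 := by
  rintro r hr
  rw [show r = (FreeGroup.of 0) ^ m * (FreeGroup.of 1) ^ n * (FreeGroup.of 0) ^ m *
    ((FreeGroup.of 1) ^ n)⁻¹ from hr]
  simp only [map_mul, map_pow, map_inv, FreeGroup.lift_apply_of, gf,
    Matrix.cons_val_zero, Matrix.cons_val_one, Matrix.head_cons]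
  rw [← map_pow SemidirectProduct.inl, ← map_pow SemidirectProduct.inr,
    ← map_inv SemidirectProduct.inr]
  rw [mul_assoc, mul_assoc, ← mul_assoc (SemidirectProduct.inr _),
    ← SemidirectProduct.inl_aut, ← map_mul]
  have hact : act m n hn ((Multiplicative.ofAdd 1) ^ n) (aa m n ⟨0, by omega⟩ ^ m) =
      aa m n ⟨0 + n, by omega⟩ ^ m := by
    rw [map_pow (act m n hn), act_ofAdd_one, map_pow]
    rw [sigmaE_pow_aa m n hn n ⟨0, by omega⟩ (show 0 + n < 2 * n by omega)]
  rw [hact, krel1 m n 0 (by omega) (by omega) (by omega)]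
  exact map_one _

/-- the map from `G_{m,n}` to the semidirect product -/
def hmap : Gmn m n →* Gh m n hn := PresentedGroup.toGroup (gf_rels m n hn)

/-- the composite of `phi` with `hmap` -/
def hphi : Kt m n →* Gh m n hn := (hmap m n hn).comp (phi m n)

lemma hmap_x : hmap m n hn (Gmn.x m n) = SemidirectProduct.inl (aa m n ⟨0, by omega⟩) := by
  rw [Gmn.x, hmap, PresentedGroup.toGroup.of]
  rfl

lemma hmap_y : hmap m n hn (Gmn.y m n) = SemidirectProduct.inr (Multiplicative.ofAdd 1) := by
  rw [Gmn.y, hmap, PresentedGroup.toGroup.of]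
  rfl

lemma hphi_none : hphi m n hn (PresentedGroup.of none) =
    SemidirectProduct.inr ((Multiplicative.ofAdd (1 : ℤ)) ^ (2 * n)) := by
  rw [hphi, MonoidHom.comp_apply, phi_none, map_pow, hmap_y, map_pow]

lemma hphi_some (j : Fin (2 * n)) : hphi m n hn (PresentedGroup.of (some j)) =
    SemidirectProduct.inl (aa m n j) := by
  rw [hphi, MonoidHom.comp_apply, phi_some, map_mul, map_mul, map_inv, map_pow,
    hmap_x, hmap_y, ← map_pow SemidirectProduct.inr, ← map_inv SemidirectProduct.inr,
    ← SemidirectProduct.inl_aut]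
  have hact : act m n hn ((Multiplicative.ofAdd 1) ^ (j : ℕ)) (aa m n ⟨0, by omega⟩) =
      aa m n j := by
    rw [map_pow, act_ofAdd_one, sigmaE_pow_aa m n hn (j : ℕ) ⟨0, by omega⟩
      (show 0 + (j : ℕ) < 2 * n by have := j.isLt; omega)]
    show aa m n ⟨0 + j.val, _⟩ = aa m n ⟨j.val, j.isLt⟩
    exact aa_congr m n _ _ (by omega)
  rw [hact]

/-- the subgroup of the semidirect product where the `ℤ`-component is divisible by `2n` -/
def L : Subgroup (Gh m n hn) where
  carrier := {z | (2 * n : ℤ) ∣ Multiplicative.toAdd z.right}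
  one_mem' := ⟨0, by simp⟩
  mul_mem' := by
    rintro a b ⟨p, hp⟩ ⟨q, hq⟩
    exact ⟨p + q, by
      rw [SemidirectProduct.mul_right, toAdd_mul, hp, hq]; ring⟩
  inv_mem' := by
    rintro a ⟨p, hp⟩
    exact ⟨-p, by rw [SemidirectProduct.inv_right, toAdd_inv, hp]; ring⟩



/-- the retraction from `L` to the presented kernel group -/
def rho : L m n hn →* Kt m n :=
  MonoidHom.mk' (fun z => z.1.left * bb m n ^ (Multiplicative.toAdd z.1.right / (2 * n : ℤ)))
    (by
      rintro ⟨a, p, hp⟩ ⟨b, q, hq⟩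
      show (a * b).left * bb m n ^ (Multiplicative.toAdd (a * b).right / (2 * n : ℤ)) =
        (a.left * bb m n ^ (Multiplicative.toAdd a.right / (2 * n : ℤ))) *
        (b.left * bb m n ^ (Multiplicative.toAdd b.right / (2 * n : ℤ)))
      rw [SemidirectProduct.mul_left, SemidirectProduct.mul_right, toAdd_mul, hp, hq]
      have hdiv : (2 * n * p + 2 * n * q) / (2 * n : ℤ) = p + q := by
        rw [← mul_add]
        exact Int.mul_ediv_cancel_left _ (two_n_ne n hn)
      have hdp : (2 * n * p : ℤ) / (2 * n : ℤ) = p := Int.mul_ediv_cancel_left _ (two_n_ne n hn)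
      have hdq : (2 * n * q : ℤ) / (2 * n : ℤ) = q := Int.mul_ediv_cancel_left _ (two_n_ne n hn)
      rw [hdiv, hdp, hdq]
      have hconj : act m n hn a.right b.left = bb m n ^ p * b.left * (bb m n ^ p)⁻¹ := by
        rw [act_apply, hp, zpow_mul,
          show ((2 * n : ℤ)) = ((2 * n : ℕ) : ℤ) by push_cast; ring,
          zpow_natCast, sigmaE_conj_eq, ← map_zpow]
        rfl
      rw [hconj]
      group)

lemma hphi_mem_L : ∀ w : Kt m n, hphi m n hn w ∈ L m n hn := by
  intro w
  refine PresentedGroup.generated_by _ ((L m n hn).comap (hphi m n hn)) (fun o => ?_) w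
  cases o with
  | none =>
    rw [Subgroup.mem_comap, hphi_none]
    refine ⟨1, ?_⟩
    rw [SemidirectProduct.right_inr, toAdd_pow, toAdd_ofAdd]
    simp
  | some j =>
    rw [Subgroup.mem_comap, hphi_some]
    exact ⟨0, by rw [SemidirectProduct.right_inl, toAdd_one]; ring⟩

lemma retract : (rho m n hn).comp
    ((hphi m n hn).codRestrict (L m n hn) (hphi_mem_L m n hn)) = MonoidHom.id _ := by
  apply PresentedGroup.ext
  intro o
  simp only [MonoidHom.comp_apply, MonoidHom.codRestrict_apply, MonoidHom.id_apply]
  cases o with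
  | none =>
    show (hphi m n hn (PresentedGroup.of none)).left *
      bb m n ^ (Multiplicative.toAdd (hphi m n hn (PresentedGroup.of none)).right /
        (2 * n : ℤ)) = PresentedGroup.of none
    rw [hphi_none, SemidirectProduct.left_inr, SemidirectProduct.right_inr,
      toAdd_pow, toAdd_ofAdd]
    rw [show ((2 * n : ℕ) • (1 : ℤ)) = (2 * n : ℤ) by push_cast; ring,
      Int.ediv_self (two_n_ne n hn)]
    group
  | some j =>
    show (hphi m n hn (PresentedGroup.of (some j))).left *
      bb m n ^ (Multiplicative.toAdd (hphi m n hn (PresentedGroup.of (some j))).right /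
        (2 * n : ℤ)) = PresentedGroup.of (some j)
    rw [hphi_some, SemidirectProduct.left_inl, SemidirectProduct.right_inl, toAdd_one,
      Int.zero_ediv]
    group

include hn in
lemma phi_inj : Function.Injective (phi m n) := by
  intro a b hab
  have ha := DFunLike.congr_fun (retract m n hn) a
  have hb := DFunLike.congr_fun (retract m n hn) b
  simp only [MonoidHom.comp_apply, MonoidHom.id_apply] at ha hb
  rw [← ha, ← hb]
  congr 1
  exact Subtype.ext (by
    simp only [MonoidHom.codRestrict_apply]
    rw [hphi, MonoidHom.comp_apply, MonoidHom.comp_apply, hab])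

lemma phi_range : (phi m n).range = Subgroup.closure
    (insert ((Gmn.y m n) ^ (2 * n))
      {g | ∃ i : Fin (2 * n),
        g = (Gmn.y m n) ^ (i : ℕ) * Gmn.x m n * ((Gmn.y m n) ^ (i : ℕ))⁻¹}) := by
  rw [MonoidHom.range_eq_map, ← PresentedGroup.closure_range_of (kRels m n),
    MonoidHom.map_closure]
  congr 1
  ext g
  constructor
  · rintro ⟨_, ⟨o, rfl⟩, rfl⟩
    cases o with
    | none => exact Set.mem_insert_iff.mpr (Or.inl (phi_none m n))
    | some j => exact Set.mem_insert_iff.mpr (Or.inr ⟨j, phi_some m n j⟩)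
  · intro hg
    rcases Set.mem_insert_iff.mp hg with rfl | ⟨j, rfl⟩
    · exact ⟨_, ⟨none, rfl⟩, phi_none m n⟩
    · exact ⟨_, ⟨some j, rfl⟩, phi_some m n j⟩

end Act
end KmnAux

/-- The subgroup `K_{m,n}` of `G_{m,n}` generated by `y^{2n}` together with the elements
`y^i x y^{-i}` for `0 ≤ i ≤ 2n − 1` is isomorphic to the presented group
`Gp⟨β, α_0, …, α_{2n−1} | α_i^m α_{i+n}^m = 1, α_i^m β = β α_i^m (0 ≤ i ≤ n−1)⟩`
via `β ↦ y^{2n}`, `α_i ↦ y^i x y^{-i}`. -/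
theorem kmn_presentation (m n : ℕ) (hm : 1 ≤ m) (hn : 1 ≤ n) :
    ∃ φ : PresentedGroup (kRels m n) →* Gmn m n,
      Function.Injective φ ∧
      φ.range = Subgroup.closure
        (insert ((Gmn.y m n) ^ (2 * n))
          {g | ∃ i : Fin (2 * n),
            g = (Gmn.y m n) ^ (i : ℕ) * Gmn.x m n * ((Gmn.y m n) ^ (i : ℕ))⁻¹}) ∧
      φ (PresentedGroup.of none) = (Gmn.y m n) ^ (2 * n) ∧
      ∀ i : Fin (2 * n), φ (PresentedGroup.of (some i)) =
        (Gmn.y m n) ^ (i : ℕ) * Gmn.x m n * ((Gmn.y m n) ^ (i : ℕ))⁻¹ := by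
  exact ⟨KmnAux.phi m n, KmnAux.phi_inj m n hn, KmnAux.phi_range m n,
    KmnAux.phi_none m n, KmnAux.phi_some m n⟩
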